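/- Let θ ∈ (0,1) and consider the Bellman equation for the pure as-you-go deployment MDP with states (r, w), A+1 ≤ r ≤ A+B, w ∈ 𝒲 (𝒲 finite), finite power set S, hop cost γ + ξ_out Q_out(r, γ, w) + ξ_relay where Q_out is nondecreasing in r and nonincreasing in w. Then the optimal value function J satisfies: place a relay at state (r, w) (for A+1 ≤ r ≤ A+B−1) if and only if min_{γ ∈ S}(γ + ξ_out Q_out(r, γ, w)) ≤ c_th(r), where c_th(r) = θ·E_W min_γ(γ + ξ_out Q_out(r+1, γ, W)) + (1−θ)·E_W J(r+1, W) − ξ_relay − J(0); moreover c_th(r) is nondecreasing in r. -/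

import Mathlib

/-- Theorem 3, OptAsYouGo threshold structure: in the pure as-you-go
Bellman equation, it is optimal to place a relay at state `(r, w)` (for
`A+1 ≤ r ≤ A+B−1`) if and only if `min_γ (γ + ξ_out Q_out(r,γ,w)) ≤ c_th(r)`, where
`c_th(r) = θ E_W min_γ(γ + ξ_out Q_out(r+1,γ,W)) + (1−θ) E_W J(r+1,W) − ξ_relay − J(0)`;
moreover `c_th` is nondecreasing in `r`. -/
theorem stmt18 {𝒲 : Type*} [Fintype 𝒲] [Nonempty 𝒲] [LinearOrder 𝒲]
    (S : Finset ℝ) (hS : S.Nonempty) (hSpos : ∀ γ ∈ S, 0 ≤ γ)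
    (A B : ℕ) (hB : 1 ≤ B)
    (Qout : ℕ → ℝ → 𝒲 → ℝ)
    (hQr : ∀ γ w, Monotone fun r => Qout r γ w)
    (hQw : ∀ r γ, Antitone fun w => Qout r γ w)
    (hQ01 : ∀ r γ w, Qout r γ w ∈ Set.Icc (0 : ℝ) 1)
    (θ ξo ξr : ℝ) (hθ : θ ∈ Set.Ioo (0 : ℝ) 1) (hξo : 0 ≤ ξo) (hξr : 0 ≤ ξr)
    (pW : 𝒲 → ℝ) (hpW : ∀ w, 0 ≤ pW w) (hpW1 : ∑ w, pW w = 1)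
    (J : ℕ → 𝒲 → ℝ) (J0 : ℝ)
    (hBell : ∀ r, A + 1 ≤ r → r ≤ A + B - 1 → ∀ w,
      J r w = min
        ((S.inf' hS fun γ => γ + ξo * Qout r γ w) + ξr + J0)
        (θ * (∑ w', pW w' * (S.inf' hS fun γ => γ + ξo * Qout (r + 1) γ w')) +
          (1 - θ) * ∑ w', pW w' * J (r + 1) w'))
    (hBellEnd : ∀ w,
      J (A + B) w = (S.inf' hS fun γ => γ + ξo * Qout (A + B) γ w) + ξr + J0)
    (hBell0 : J0 =
      (∑ k ∈ Finset.Icc 1 (A + 1), (1 - θ) ^ (k - 1) * θ *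
        ∑ w', pW w' * (S.inf' hS fun γ => γ + ξo * Qout k γ w')) +
      (1 - θ) ^ (A + 1) * ∑ w', pW w' * J (A + 1) w') :
    (∀ r, A + 1 ≤ r → r ≤ A + B - 1 → ∀ w,
      (((S.inf' hS fun γ => γ + ξo * Qout r γ w) + ξr + J0 ≤
          θ * (∑ w', pW w' * (S.inf' hS fun γ => γ + ξo * Qout (r + 1) γ w')) +
            (1 - θ) * ∑ w', pW w' * J (r + 1) w')
        ↔
        (S.inf' hS fun γ => γ + ξo * Qout r γ w) ≤
          θ * (∑ w', pW w' * (S.inf' hS fun γ => γ + ξo * Qout (r + 1) γ w')) +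
            (1 - θ) * (∑ w', pW w' * J (r + 1) w') - ξr - J0)) ∧
    (∀ r r', A + 1 ≤ r → r ≤ r' → r' ≤ A + B - 1 →
      θ * (∑ w', pW w' * (S.inf' hS fun γ => γ + ξo * Qout (r + 1) γ w')) +
          (1 - θ) * (∑ w', pW w' * J (r + 1) w') - ξr - J0 ≤
        θ * (∑ w', pW w' * (S.inf' hS fun γ => γ + ξo * Qout (r' + 1) γ w')) +
          (1 - θ) * (∑ w', pW w' * J (r' + 1) w') - ξr - J0) := by

  obtain ⟨hθ0, hθ1⟩ := hθ
  have hm : ∀ r r' : ℕ, r ≤ r' → ∀ w : 𝒲,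
      (S.inf' hS fun γ => γ + ξo * Qout r γ w) ≤
        (S.inf' hS fun γ => γ + ξo * Qout r' γ w) := by
    intro r r' hrr w
    apply Finset.le_inf'
    intro γ hγ
    calc (S.inf' hS fun γ => γ + ξo * Qout r γ w) ≤ γ + ξo * Qout r γ w :=
          Finset.inf'_le _ hγ
      _ ≤ γ + ξo * Qout r' γ w := by
          have := hQr γ w hrr
          nlinarith [this]
  -- pointwise monotonicity of J in r
  have hJstep : ∀ n r, A + 1 ≤ r → r + 1 + n = A + B → ∀ w, J r w ≤ J (r + 1) w := by
    intro n
    induction n with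
    | zero =>
      intro r hr hend w
      have hr1 : r + 1 = A + B := by omega
      have hrle : r ≤ A + B - 1 := by omega
      rw [hBell r hr hrle w, hr1, hBellEnd w]
      calc min ((S.inf' hS fun γ => γ + ξo * Qout r γ w) + ξr + J0) _
          ≤ (S.inf' hS fun γ => γ + ξo * Qout r γ w) + ξr + J0 := min_le_left _ _
        _ ≤ (S.inf' hS fun γ => γ + ξo * Qout (A + B) γ w) + ξr + J0 := by
            have := hm r (A + B) (by omega) w; linarith
    | succ n ih =>
      intro r hr hend w
      have hrle : r ≤ A + B - 1 := by omega
      have hr1le : r + 1 ≤ A + B - 1 := by omega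
      have hIH : ∀ w, J (r + 1) w ≤ J (r + 2) w := by
        intro w; exact ih (r + 1) (by omega) (by omega) w
      rw [hBell r hr hrle w, hBell (r + 1) (by omega) hr1le w]
      apply min_le_min
      · have := hm r (r + 1) (by omega) w; linarith
      · have h1 : (∑ w', pW w' * (S.inf' hS fun γ => γ + ξo * Qout (r + 1) γ w')) ≤
            ∑ w', pW w' * (S.inf' hS fun γ => γ + ξo * Qout (r + 1 + 1) γ w') := by
          apply Finset.sum_le_sum
          intro w' _
          exact mul_le_mul_of_nonneg_left (hm (r + 1) (r + 2) (by omega) w') (hpW w')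
        have h2 : (∑ w', pW w' * J (r + 1) w') ≤ ∑ w', pW w' * J (r + 1 + 1) w' := by
          apply Finset.sum_le_sum
          intro w' _
          exact mul_le_mul_of_nonneg_left (hIH w') (hpW w')
        nlinarith [h1, h2]
  have hJmono : ∀ r r', A + 1 ≤ r → r ≤ r' → r' ≤ A + B → ∀ w, J r w ≤ J r' w := by
    intro r r' hr hrr hr' w
    induction r' with
    | zero => omega
    | succ k ih =>
      rcases Nat.lt_or_ge r (k + 1) with h | h
      · have hk : r ≤ k := by omega
        calc J r w ≤ J k w := ih (by omega) (by omega)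
          _ ≤ J (k + 1) w := hJstep (A + B - (k + 1)) k (by omega) (by omega) w
      · have : r = k + 1 := by omega
        rw [this]
  constructor
  · intro r _ _ w
    constructor <;> intro h <;> linarith
  · intro r r' hr hrr hr'
    have h1 : (∑ w', pW w' * (S.inf' hS fun γ => γ + ξo * Qout (r + 1) γ w')) ≤
        ∑ w', pW w' * (S.inf' hS fun γ => γ + ξo * Qout (r' + 1) γ w') := by
      apply Finset.sum_le_sum
      intro w' _
      exact mul_le_mul_of_nonneg_left (hm (r + 1) (r' + 1) (by omega) w') (hpW w')
    have h2 : (∑ w', pW w' * J (r + 1) w') ≤ ∑ w', pW w' * J (r' + 1) w' := by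
      apply Finset.sum_le_sum
      intro w' _
      exact mul_le_mul_of_nonneg_left
        (hJmono (r + 1) (r' + 1) (by omega) (by omega) (by omega) w') (hpW w')
    nlinarith [h1, h2]
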